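/- For every l ∈ ℕ and every i ∈ T with |i| ≤ l, almost surely Y_l = Π_i·[Y_{l−|i|}]_i + ∑_{k=1}^{|i|} Π_{i|_{k−1}}·Z_{l,i|_k}, where [Y_m]_j denotes the copy of Y_m built from the data of the subtree rooted at j. -/

import Mathlib

open MeasureTheory ProbabilityTheory Filter Matrix RealInnerProductSpace

noncomputable section

/-- Vectors in `ℝ^d` with the Euclidean norm. -/
abbrev Vec (d : ℕ) := EuclideanSpace ℝ (Fin d)

/-- `d × d` real matrices. -/
abbrev Mat (d : ℕ) := Matrix (Fin d) (Fin d) ℝ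

variable {d : ℕ}

instance matMeasurableSpace : MeasurableSpace (Mat d) :=
  (inferInstance : MeasurableSpace (Fin d → Fin d → ℝ))

instance matMeasureSpace : MeasureSpace (Mat d) :=
  (inferInstance : MeasureSpace (Fin d → Fin d → ℝ))

/-- Action of a matrix on a Euclidean vector. -/
def mv (a : Mat d) (x : Vec d) : Vec d := Matrix.toEuclideanLin a x

/-- Operator norm of a matrix acting on Euclidean space. -/
def opNorm (a : Mat d) : ℝ := ‖Matrix.toEuclideanCLM (𝕜 := ℝ) a‖

/-- Product of the edge weights along the path from node `j` to node `j ++ i`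
in the Ulam–Harris tree, where `An j' i'` is the weight of the edge from `j'`
to its `i'`-th child. -/
def pathProdFrom {Ω : Type} (An : List ℕ → ℕ → Ω → Mat d) (j : List ℕ) (i : List ℕ)
    (ω : Ω) : Mat d :=
  (List.ofFn (fun k : Fin i.length => An (j ++ i.take (k : ℕ)) (i.get k) ω)).prod

/-- Product of the edge weights from the root to node `i` (denoted `Π_i`). -/
def pathProd {Ω : Type} (An : List ℕ → ℕ → Ω → Mat d) (i : List ℕ) (ω : Ω) : Mat d :=
  pathProdFrom An ([]) i ω

/-- The spine `(1,1,…,1)` of length `n`. -/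
def spine (n : ℕ) : List ℕ := List.replicate n 1

/-- Longest common prefix of two nodes (denoted `i ∧ i'` in the paper). -/
def lcp : List ℕ → List ℕ → List ℕ
  | a :: as, b :: bs => if a = b then a :: lcp as bs else ([])
  | _, _ => ([])

/-- Membership of a node in the (random) tree `T` determined by the offspring
numbers `Nn`. -/
def memT {Ω : Type} (Nn : List ℕ → Ω → ℕ) (ω : Ω) (i : List ℕ) : Prop :=
  ∀ k : Fin i.length, 1 ≤ i.get k ∧ i.get k ≤ Nn (i.take (k : ℕ)) ω

/-- Codomain of the random data attached to a node: `inl j` carries the copy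
`(Q_j, (A_{ji})_i)` and `inr j` carries the copy `X_j`. -/
def copyType (d : ℕ) : List ℕ ⊕ List ℕ → Type
  | Sum.inl _ => Vec d × (ℕ → Mat d)
  | Sum.inr _ => Vec d

instance copyTypeMS (d : ℕ) : ∀ t, MeasurableSpace (copyType d t) := fun t => by
  cases t with
  | inl _ => exact (inferInstance : MeasurableSpace (Vec d × (ℕ → Mat d)))
  | inr _ => exact (inferInstance : MeasurableSpace (Vec d))

/-- The family of node data, bundled as a single family of random variables. -/
def nodeFun {Ω : Type} (Qn : List ℕ → Ω → Vec d) (An : List ℕ → ℕ → Ω → Mat d)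
    (Xn : List ℕ → Ω → Vec d) : ∀ t : List ℕ ⊕ List ℕ, Ω → copyType d t
  | Sum.inl j => fun ω => (Qn j ω, fun i => An j i ω)
  | Sum.inr j => Xn j

/-- The full setting for the multivariate smoothing transform: a probability space
carrying the random element `(Q, (A_i)_{i ≥ 1})` (with `A_0 := 0` by convention,
since indices start at `1`), i.i.d. copies `(Q_j, (A_{ji})_i)` of it and i.i.d.
copies `X_j` of a random vector `X` attached to the nodes `j` of the Ulam–Harris
tree, together with the function `k(s) = lim_n (E‖M_n ⋯ M_1‖^s)^{1/n}`, where the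
`M_i` are i.i.d. with the law `μ` of `A_1^*`. -/
structure Setup (d : ℕ) (Ω : Type) [MeasurableSpace Ω] where
  P : Measure Ω
  probP : IsProbabilityMeasure P
  Qn : List ℕ → Ω → Vec d
  An : List ℕ → ℕ → Ω → Mat d
  Xn : List ℕ → Ω → Vec d
  X : Ω → Vec d
  Nn : List ℕ → Ω → ℕ
  kFun : ℝ → ℝ
  measQn : ∀ j, Measurable (Qn j)
  measAn : ∀ j i, Measurable (An j i)
  measXn : ∀ j, Measurable (Xn j)
  measX : Measurable X
  measNn : ∀ j, Measurable (Nn j)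
  hA0 : ∀ j ω, An j 0 ω = 0
  hNmax : ∀ j ω i, Nn j ω < i → An j i ω = 0
  hNattain : ∀ j ω, Nn j ω ≠ 0 → An j (Nn j ω) ω ≠ 0
  indepCopies : iIndepFun (m := copyTypeMS d) (nodeFun Qn An Xn) P
  lawQA : ∀ j, P.map (fun ω => (Qn j ω, fun i => An j i ω))
      = P.map (fun ω => (Qn ([]) ω, fun i => An ([]) i ω))
  lawXn : ∀ j, P.map (Xn j) = P.map X
  hkFun : ∀ s : ℝ, 0 ≤ s →
    Integrable (fun ω => opNorm (An ([]) 1 ω) ^ s) P →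
    Tendsto (fun n : ℕ => (∫ ω, opNorm (pathProd An (spine n) ω) ^ s ∂P) ^ ((n : ℝ)⁻¹))
      atTop (nhds (kFun s))

attribute [instance] Setup.probP

namespace Setup

variable {Ω : Type} [MeasurableSpace Ω] (S : Setup d Ω)

/-- The law `μ` of `A_1^*`. -/
def muA : Measure (Mat d) := S.P.map (fun ω => (S.An ([]) 1 ω)ᵀ)

/-- `E[N]`. -/
def EN : ℝ := ∫ ω, (S.Nn ([]) ω : ℝ) ∂S.P

/-- `m(s) := E[N] · k(s)`. -/
def mFun (s : ℝ) : ℝ := S.EN * S.kFun s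

/-- `Π_n^* = M_n ⋯ M_1`, realized as the transpose of the weight product along
the spine of the tree (so that the `M_i` are i.i.d. with law `μ`). -/
def PiStar (n : ℕ) (ω : Ω) : Mat d := (pathProd S.An (spine n) ω)ᵀ

end Setup

namespace Setup

variable {d : ℕ} {Ω : Type} [MeasurableSpace Ω] (S : Setup d Ω)

/-- `Y_m` built from the data of the subtree rooted at `j` (denoted `[Y_m]_j`). -/
def Ysub (j : List ℕ) (m : ℕ) (ω : Ω) : Vec d :=
  (∑' i : List ℕ, if i.length < m then mv (pathProdFrom S.An j i ω) (S.Qn (j ++ i) ω) else 0)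
    + (∑' i : List ℕ, if i.length = m then mv (pathProdFrom S.An j i ω) (S.Xn (j ++ i) ω) else 0)

/-- The weighted branching process `Y_l` associated with `(Q, (A_i))` and `X`. -/
def Y (l : ℕ) (ω : Ω) : Vec d := S.Ysub ([]) l ω

/-- `Z_{l,jc} = ∑_{j' ≤ N_j, j' ≠ c} A_{jj'} [Y_{l-|j|-1}]_{jj'} + Q_j`. -/
def Zwbp (l : ℕ) (j : List ℕ) (c : ℕ) (ω : Ω) : Vec d :=
  (∑ j' ∈ (Finset.Icc 1 (S.Nn j ω)).erase c,
      mv (S.An j j' ω) (S.Ysub (j ++ [j']) (l - j.length - 1) ω))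
    + S.Qn j ω

/-- `Z` at node `j` with excluded child `c`:
`∑_{j' ≤ N_j, j' ≠ c} A_{jj'} X_{jj'} + Q_j`. -/
def Zx (j : List ℕ) (c : ℕ) (ω : Ω) : Vec d :=
  (∑ j' ∈ (Finset.Icc 1 (S.Nn j ω)).erase c, mv (S.An j j' ω) (S.Xn (j ++ [j']) ω))
    + S.Qn j ω

/-- The event `V_{i,t}` (for direction `u` and constants `C0`, `δ`). -/
def Vset (u : Vec d) (C0 δ t : ℝ) (i : List ℕ) : Set Ω :=
  {ω | t ≤ ‖mv ((pathProd S.An i ω)ᵀ) u‖ ∧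
    ∀ k : Fin i.length,
      opNorm ((pathProd S.An (i.take (k : ℕ)) ω)ᵀ) * max ‖S.Zx (i.take (k : ℕ)) (i.get k) ω‖ 1
        ≤ Real.exp (-(((i.length : ℝ) - (k : ℕ)) * δ)) * (C0 * t)}

/-- The event `W_{i,i',t}` (for direction `u` and constants `C0`, `δ`). -/
def Wset (u : Vec d) (C0 δ t : ℝ) (i i' : List ℕ) : Set Ω :=
  {ω | t < ‖mv ((pathProd S.An i ω)ᵀ) u‖ ∧ t < ‖mv ((pathProd S.An i' ω)ᵀ) u‖ ∧
    opNorm (pathProd S.An (lcp i i') ω)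
      ≤ C0 * t * Real.exp (-δ * ((i.length : ℝ) - (lcp i i').length))}

/-- The event `V_{n,t}` built from the i.i.d. sequence `(M_n, Z_n)`, where
`M_n` is the transpose of the `n`-th spine weight and `Z_n` the corresponding
`Z`-variable (excluding the spine child `1`). -/
def Vnt (u : Vec d) (C0 δ t : ℝ) (n : ℕ) : Set Ω :=
  {ω | t ≤ ‖mv (S.PiStar n ω) u‖ ∧
    ∀ k : ℕ, k < n →
      opNorm (S.PiStar k ω) * max ‖S.Zx (spine k) 1 ω‖ 1
        ≤ Real.exp (-(((n : ℝ) - k) * δ)) * (C0 * t)}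

/-- The σ-algebra generated by the shape of the tree, i.e. by the offspring
numbers `(N_j)_j`. -/
def treeSigma : MeasurableSpace Ω :=
  ⨆ j : List ℕ, MeasurableSpace.comap (S.Nn j) (inferInstance : MeasurableSpace ℕ)

end Setup

/-- `n_t := ⌈log t / ρ⌉`. -/
def ntOf (ρ t : ℝ) : ℕ := ⌈Real.log t / ρ⌉₊

/-- The set `L_t` of generations used for the sparse subtree `W`. -/
def LtSet (C1 nt : ℕ) : Set ℕ :=
  {l | C1 ∣ l ∧ (nt : ℝ) - Real.sqrt nt ≤ l ∧ (l : ℝ) < nt - Real.sqrt nt / 2}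

namespace Setup

variable {d : ℕ} {Ω : Type} [MeasurableSpace Ω] (S : Setup d Ω)

/-- The sparse (random) subtree `W ⊆ T`: nodes whose generation lies in `L_t`
and whose last `C1` entries are all equal to `1`. -/
def Wsparse (C1 nt : ℕ) (ω : Ω) : Set (List ℕ) :=
  {i | memT S.Nn ω i ∧ i.length ∈ LtSet C1 nt ∧
    ∀ k : Fin i.length, i.length - C1 ≤ (k : ℕ) → i.get k = 1}

/-- `E[∑_{i ∈ W} P(V_{i,t})]` for a random subset `W` of the tree. -/
def ESumV (u : Vec d) (C0 δ t : ℝ) (W : Ω → Set (List ℕ)) : ENNReal :=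
  ∫⁻ ω, ∑' i : List ℕ, Set.indicator (W ω) (fun i' => S.P (S.Vset u C0 δ t i')) i ∂S.P

/-- `E[∑_{i ∈ W} ∑_{i' ∈ W, |i'| ≤ |i|, i' ≠ i} P(W_{i,i',t})]` for a random
subset `W` of the tree. -/
def ESumW (u : Vec d) (C0 δ t : ℝ) (W : Ω → Set (List ℕ)) : ENNReal :=
  ∫⁻ ω, ∑' p : List ℕ × List ℕ,
    Set.indicator {p' : List ℕ × List ℕ |
        p'.1 ∈ W ω ∧ p'.2 ∈ W ω ∧ p'.2.length ≤ p'.1.length ∧ p'.2 ≠ p'.1}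
      (fun p' => S.P (S.Wset u C0 δ t p'.1 p'.2)) p ∂S.P

end Setup

/-- The number of nodes in a set of nodes, as an element of `ENNReal`. -/
def countNodes (s : Set (List ℕ)) : ENNReal :=
  ∑' i : List ℕ, Set.indicator s (fun _ => (1 : ENNReal)) i
/-- The support of a measure on matrices: points all of whose neighbourhoods
have positive measure. -/
def msupp {d : ℕ} (μm : MeasureTheory.Measure (Mat d)) : Set (Mat d) :=
  {a | ∀ U : Set (Mat d), IsOpen U → a ∈ U → μm U ≠ 0}

/-- A nonnegative matrix which has no zero row and no zero column. -/
def Allowable {d : ℕ} (a : Mat d) : Prop :=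
  (∀ r c, 0 ≤ a r c) ∧ (∀ r, ∃ c, a r c ≠ 0) ∧ (∀ c, ∃ r, a r c ≠ 0)

/-- A matrix with strictly positive entries. -/
def PosMat {d : ℕ} (a : Mat d) : Prop := ∀ r c, 0 < a r c

/-- A proximal matrix: it has an algebraically simple real eigenvalue which
strictly dominates all other (complex) eigenvalues in absolute value. -/
def Proximal {d : ℕ} (a : Mat d) : Prop :=
  ∃ lam : ℝ, Polynomial.rootMultiplicity (lam : ℂ)
      ((Matrix.charpoly a).map (algebraMap ℝ ℂ)) = 1 ∧
    ∀ z : ℂ, ((Matrix.charpoly a).map (algebraMap ℝ ℂ)).IsRoot z → z ≠ (lam : ℂ) →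
      ‖z‖ < |lam|

/-- Strong irreducibility of (the semigroup generated by the support of) `μ`:
there is no `Γ`-invariant finite union of proper nonzero subspaces. -/
def StrongIrred {d : ℕ} (μm : MeasureTheory.Measure (Mat d)) : Prop :=
  ¬ ∃ F : Finset (Submodule ℝ (Vec d)), F.Nonempty ∧ (∀ W ∈ F, W ≠ ⊥ ∧ W ≠ ⊤) ∧
    ∀ a ∈ Subsemigroup.closure (msupp μm), ∀ x ∈ ⋃ W ∈ F, (W : Set (Vec d)),
      mv a x ∈ ⋃ W ∈ F, (W : Set (Vec d))

/-- There is no `Γ`-invariant proper closed convex cone. -/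
def NoInvCone {d : ℕ} (μm : MeasureTheory.Measure (Mat d)) : Prop :=
  ¬ ∃ C : Set (Vec d), IsClosed C ∧ Convex ℝ C ∧
    (∀ r : ℝ, 0 ≤ r → ∀ x ∈ C, r • x ∈ C) ∧ C ≠ {0} ∧ C.Nonempty ∧
    C ∩ (-C) ⊆ {0} ∧ ∀ a ∈ Subsemigroup.closure (msupp μm), ∀ x ∈ C, mv a x ∈ C

/-- Condition (i-p,o): strong irreducibility, proximality, and absence of an
invariant proper closed convex cone. -/
def IPO {d : ℕ} (μm : MeasureTheory.Measure (Mat d)) : Prop :=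
  StrongIrred μm ∧ (∃ a ∈ Subsemigroup.closure (msupp μm), Proximal a) ∧ NoInvCone μm

/-- The set `S(Γ)` of logarithms of dominant eigenvalues (with nonnegative
eigenvector) of the positive matrices of the semigroup `Γ`. -/
def DomEigLog {d : ℕ} (μm : MeasureTheory.Measure (Mat d)) : Set ℝ :=
  {x | ∃ a ∈ Subsemigroup.closure (msupp μm), PosMat a ∧
    ∃ v : Vec d, v ≠ 0 ∧ (∀ i, 0 ≤ v i) ∧ mv a v = Real.exp x • v}

/-- `μ` is non-arithmetic: the additive subgroup generated by `S(Γ)` is dense. -/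
def NonArith {d : ℕ} (μm : MeasureTheory.Measure (Mat d)) : Prop :=
  Dense ((AddSubgroup.closure (DomEigLog μm) : AddSubgroup ℝ) : Set ℝ)

/-- Marker for the two geometric settings: `ga` for nonnegative matrices
(condition (C)), `gb` for invertible matrices (conditions (i-p,o) or (i-d)). -/
inductive GeoCase | ga | gb

/-- The relevant part of the unit sphere: `S^{d-1} ∩ [0,∞)^d` in case (Ga), the
whole sphere `S^{d-1}` in case (Gb). -/
def Sph (d : ℕ) : GeoCase → Set (Vec d)
  | GeoCase.ga => {x | ‖x‖ = 1 ∧ ∀ i, 0 ≤ x i}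
  | GeoCase.gb => {x | ‖x‖ = 1}

/-- The relevant cone: `[0,∞)^d` in case (Ga), all of `ℝ^d` in case (Gb). -/
def coneSpace (d : ℕ) : GeoCase → Set (Vec d)
  | GeoCase.ga => {x | ∀ i, 0 ≤ x i}
  | GeoCase.gb => Set.univ

/-- `ι(a) := inf_{x ∈ S} |ax|`. -/
def iotaS (d : ℕ) (g : GeoCase) (a : Mat d) : ℝ :=
  sInf ((fun x => ‖mv a x‖) '' Sph d g)

namespace Setup

variable {d : ℕ} {Ω : Type} [MeasurableSpace Ω] (S : Setup d Ω)

/-- Condition (i-d): the projective chain can reach every open set of the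
sphere, and some power of `Π_n^*` has a density component. -/
def IDcond : Prop :=
  (∀ B : Set (Vec d), IsOpen B → ∀ x : Vec d, ‖x‖ = 1 → (∃ y ∈ B, ‖y‖ = 1) →
    ∃ n : ℕ, S.P {ω | (‖mv (S.PiStar n ω) x‖)⁻¹ • mv (S.PiStar n ω) x ∈ B} ≠ 0) ∧
  (∃ m0 : Mat d, IsUnit m0 ∧ ∃ dl : ℝ, 0 < dl ∧ ∃ c : ℝ, 0 < c ∧ ∃ n0 : ℕ,
    ∀ E : Set (Mat d), MeasurableSet E →
      ENNReal.ofReal c * MeasureTheory.volume (E ∩ {m : Mat d | opNorm (m - m0) < dl})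
        ≤ S.P.map (S.PiStar n0) E)

/-- Geometric assumption (Ga): nonnegative allowable matrices, a strictly
positive matrix in the semigroup, non-arithmeticity; `Q` is nonnegative too. -/
def GaCond : Prop :=
  (∀ᵐ ω ∂S.P, (∀ l, 0 ≤ S.Qn ([]) ω l) ∧ ∀ i r c, 0 ≤ S.An ([]) i ω r c) ∧
  (∀ a ∈ msupp S.muA, Allowable a) ∧
  (∃ a ∈ Subsemigroup.closure (msupp S.muA), PosMat a) ∧
  NonArith S.muA

/-- Geometric assumption (Gb): invertible matrices satisfying (i-p,o) or (i-d). -/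
def GbCond : Prop :=
  (∀ᵐ ω ∂S.P, ∀ i, 1 ≤ i → i ≤ S.Nn ([]) ω → IsUnit (S.An ([]) i ω)) ∧
  (IPO S.muA ∨ S.IDcond)

/-- The geometric assumption corresponding to the case marker. -/
def GeoH : GeoCase → Prop
  | GeoCase.ga => S.GaCond
  | GeoCase.gb => S.GbCond

/-- Case (N-random): `1 < E[N] < ∞`; conditioned upon `N`, the matrices
`(A_i)_{i=1}^N` are i.i.d. (with the law of `A_1`), and `Q` is independent of
`(N, (A_i)_{i ≥ 1})`. -/
def NRandom : Prop :=
  MeasureTheory.Integrable (fun ω => (S.Nn ([]) ω : ℝ)) S.P ∧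
  1 < S.EN ∧
  (∀ n : ℕ, S.P {ω | S.Nn ([]) ω = n} ≠ 0 →
    ProbabilityTheory.iIndepFun (m := fun _ : Fin n => matMeasurableSpace)
      (fun i ω => S.An ([]) ((i : ℕ) + 1) ω)
      (ProbabilityTheory.cond S.P {ω | S.Nn ([]) ω = n}) ∧
    ∀ i : Fin n,
      (ProbabilityTheory.cond S.P {ω | S.Nn ([]) ω = n}).map (S.An ([]) ((i : ℕ) + 1))
        = S.P.map (S.An ([]) 1)) ∧
  ProbabilityTheory.IndepFun (S.Qn ([]))
    (fun ω => (S.Nn ([]) ω, fun i => S.An ([]) i ω)) S.P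

/-- Case (N-fixed): `N ≥ 2` is constant, the supports of the `A_i` are bounded,
and `(A_i)_{i=1}^N` are exchangeable (hence identically distributed). -/
def NFixed : Prop :=
  ∃ n : ℕ, 2 ≤ n ∧ (∀ ω, S.Nn ([]) ω = n) ∧
    (∃ c : ℝ, ∀ᵐ ω ∂S.P, ∀ i, opNorm (S.An ([]) i ω) ≤ c) ∧
    ∀ σ : Equiv.Perm (Fin n),
      S.P.map (fun ω (i : Fin n) => S.An ([]) ((i : ℕ) + 1) ω)
        = S.P.map (fun ω (i : Fin n) => S.An ([]) (((σ i : Fin n) : ℕ) + 1) ω)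

/-- Moment assumptions (M1): `0 < α < β`, `m(α) = m(β) = 1`,
`E|Q|^{β+ε} < ∞` and `E[‖A_1^*‖^{β+ε} ι(A_1^*)^{-ε}] < ∞`. -/
def M1 (g : GeoCase) (α β ε : ℝ) : Prop :=
  0 < α ∧ α < β ∧ 0 < ε ∧ S.mFun α = 1 ∧ S.mFun β = 1 ∧
  MeasureTheory.Integrable (fun ω => ‖S.Qn ([]) ω‖ ^ (β + ε)) S.P ∧
  MeasureTheory.Integrable
    (fun ω => opNorm ((S.An ([]) 1 ω)ᵀ) ^ (β + ε) * iotaS d g ((S.An ([]) 1 ω)ᵀ) ^ (-ε)) S.P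

/-- `X` is a fixed point of the multivariate smoothing transform:
`X` has the same law as `∑_{i=1}^N A_i X_i + Q`, where the `X_i = X_{(i)}` are
the i.i.d. copies of `X` attached to the first generation, independent of
`(Q, (A_i))`. -/
def FixedPoint : Prop :=
  S.P.map S.X
    = S.P.map (fun ω =>
        (∑ i ∈ Finset.Icc 1 (S.Nn ([]) ω), mv (S.An ([]) i ω) (S.Xn ([i]) ω)) + S.Qn ([]) ω)

/-- Moment assumption (M2): `X` is a nondegenerate fixed point with
`E|X|^s < ∞` for all `s < β`. -/
def M2 (β : ℝ) : Prop :=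
  S.FixedPoint ∧ (¬ ∃ c : Vec d, ∀ᵐ ω ∂S.P, S.X ω = c) ∧
  ∀ s : ℝ, 0 ≤ s → s < β → MeasureTheory.Integrable (fun ω => ‖S.X ω‖ ^ s) S.P

end Setup


/-! ### Auxiliary lemmas for the decomposition -/

section WBPaux

variable {d : ℕ} {Ω : Type}

lemma mv_one (x : Vec d) : mv (1 : Mat d) x = x := by
  simp [mv, Matrix.toEuclideanLin_apply]

lemma mv_mul (a b : Mat d) (x : Vec d) : mv (a * b) x = mv a (mv b x) := by
  simp [mv, Matrix.toEuclideanLin_apply, Matrix.mulVec_mulVec]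

lemma mv_zero (a : Mat d) : mv a (0 : Vec d) = 0 := by simp [mv]

lemma mv_zero' (x : Vec d) : mv (0 : Mat d) x = 0 := by simp [mv]

lemma mv_add (a : Mat d) (x y : Vec d) : mv a (x + y) = mv a x + mv a y := by simp [mv]

lemma mv_sum {α : Type*} (a : Mat d) (s : Finset α) (f : α → Vec d) :
    mv a (∑ k ∈ s, f k) = ∑ k ∈ s, mv a (f k) := by simp [mv]

lemma mv_tsum (a : Mat d) (f : List ℕ → Vec d) (hf : Summable f) :
    ∑' i, mv a (f i) = mv a (∑' i, f i) := by
  have := (LinearMap.toContinuousLinearMap (Matrix.toEuclideanLin a)).map_tsum hf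
  simpa [mv] using this.symm

lemma pathProdFrom_nil (An : List ℕ → ℕ → Ω → Mat d) (j : List ℕ) (ω : Ω) :
    pathProdFrom An j ([]) ω = 1 := by simp [pathProdFrom]

lemma pathProdFrom_cons (An : List ℕ → ℕ → Ω → Mat d) (j : List ℕ) (c : ℕ) (i : List ℕ)
    (ω : Ω) :
    pathProdFrom An j (c :: i) ω = An j c ω * pathProdFrom An (j ++ [c]) i ω := by
  simp only [pathProdFrom, List.length_cons, List.ofFn_succ, List.prod_cons, Fin.val_zero,
    List.take_zero, List.append_nil, List.get_eq_getElem, List.getElem_cons_zero]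
  refine congrArg _ (congrArg _ (congrArg List.ofFn (funext fun k => ?_)))
  simp [List.take_succ_cons, List.append_assoc]

lemma pathProdFrom_eq_zero (An : List ℕ → ℕ → Ω → Mat d) {j i : List ℕ} {ω : Ω}
    {k : Fin i.length} (h : An (j ++ i.take (k : ℕ)) (i.get k) ω = 0) :
    pathProdFrom An j i ω = 0 := by
  apply List.prod_eq_zero
  rw [List.mem_ofFn]
  exact ⟨k, h⟩

lemma finite_tree : ∀ (m : ℕ) (B : List ℕ → ℕ),
    {i : List ℕ | i.length ≤ m ∧ ∀ k : Fin i.length, i.get k ≤ B (i.take (k : ℕ))}.Finite := by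
  intro m
  induction m with
  | zero =>
    intro B
    refine Set.Finite.subset (Set.finite_singleton ([])) ?_
    rintro i ⟨h1, -⟩
    simp [List.length_eq_zero_iff.mp (Nat.le_zero.mp h1)]
  | succ n ih =>
    intro B
    refine Set.Finite.subset (Set.Finite.insert ([])
      ((Set.finite_Icc 0 (B ([]))).biUnion
        (fun c _ => ((ih (fun l => B (c :: l))).image (List.cons c)))) ) ?_
    rintro i ⟨h1, h2⟩
    cases i with
    | nil => exact Set.mem_insert _ _
    | cons c i' =>
      refine Set.mem_insert_of_mem _ ?_
      have hc : c ∈ Set.Icc 0 (B ([])) := by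
        refine Set.mem_Icc.mpr ⟨Nat.zero_le _, ?_⟩
        have := h2 ⟨0, by simp⟩
        simpa using this
      have hmem : i' ∈ {i : List ℕ | i.length ≤ n ∧
          ∀ k : Fin i.length, i.get k ≤ B (c :: i.take (k : ℕ))} := by
        refine ⟨?_, ?_⟩
        · simpa using Nat.succ_le_succ_iff.mp (by simpa using h1)
        · intro k
          have := h2 k.succ
          simpa [List.take_succ_cons] using this
      exact Set.mem_biUnion hc ⟨i', hmem, rfl⟩

lemma cons_inj : Function.Injective (fun p : ℕ × List ℕ => p.1 :: p.2) := by
  rintro ⟨a, b⟩ ⟨c, e⟩ h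
  simpa using h

lemma tsum_list_split (f : List ℕ → Vec d) (hf : Summable f) (N : ℕ)
    (h0 : ∀ c i', c ∉ Finset.Icc 1 N → f (c :: i') = 0) :
    ∑' i, f i = f ([]) + ∑ c ∈ Finset.Icc 1 N, ∑' i', f (c :: i') := by
  rw [Summable.tsum_eq_add_tsum_ite hf ([])]
  congr 1
  have h1 : ∑' i, (if i = ([]) then 0 else f i)
      = ∑' p : ℕ × List ℕ, f (p.1 :: p.2) := by
    rw [← cons_inj.tsum_eq (f := fun i => if i = ([]) then 0 else f i)]
    · exact tsum_congr fun p => by simp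
    · intro i hi
      rcases i with _ | ⟨c, i'⟩
      · simp at hi
      · exact ⟨(c, i'), rfl⟩
  rw [h1]
  have hs : Summable (fun p : ℕ × List ℕ => f (p.1 :: p.2)) := by
    have := (hf.comp_injective cons_inj)
    exact this
  rw [Summable.tsum_prod hs]
  refine tsum_eq_sum ?_
  intro c hc
  have hz : ∀ i' : List ℕ, f (c :: i') = (fun _ : List ℕ => (0 : Vec d)) i' :=
    fun i' => h0 c i' hc
  rw [tsum_congr hz, tsum_zero]

variable [MeasurableSpace Ω] (S : Setup d Ω)

/-- The `Q`-part summand of `Ysub`. -/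
def qf (j : List ℕ) (m : ℕ) (ω : Ω) (i : List ℕ) : Vec d :=
  if i.length < m then mv (pathProdFrom S.An j i ω) (S.Qn (j ++ i) ω) else 0

/-- The `X`-part summand of `Ysub`. -/
def xf (j : List ℕ) (m : ℕ) (ω : Ω) (i : List ℕ) : Vec d :=
  if i.length = m then mv (pathProdFrom S.An j i ω) (S.Xn (j ++ i) ω) else 0

lemma Ysub_eq (j : List ℕ) (m : ℕ) (ω : Ω) :
    S.Ysub j m ω = (∑' i, qf S j m ω i) + (∑' i, xf S j m ω i) := rfl

lemma pathProdFrom_eq_zero' {j i : List ℕ} {ω : Ω}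
    (h : ¬ ∀ k : Fin i.length, i.get k ≤ S.Nn (j ++ i.take (k : ℕ)) ω) :
    pathProdFrom S.An j i ω = 0 := by
  push_neg at h
  obtain ⟨k, hk⟩ := h
  exact pathProdFrom_eq_zero S.An (S.hNmax _ _ _ hk)

lemma qf_summable (j : List ℕ) (m : ℕ) (ω : Ω) : Summable (qf S j m ω) := by
  refine summable_of_finite_support ((finite_tree m (fun l => S.Nn (j ++ l) ω)).subset ?_)
  intro i hi
  simp only [Function.mem_support] at hi
  by_contra hns
  apply hi
  simp only [Set.mem_setOf_eq, not_and] at hns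
  unfold qf
  split
  · rename_i hlt
    rw [pathProdFrom_eq_zero' S (hns (le_of_lt hlt)), mv_zero']
  · rfl

lemma xf_summable (j : List ℕ) (m : ℕ) (ω : Ω) : Summable (xf S j m ω) := by
  refine summable_of_finite_support ((finite_tree m (fun l => S.Nn (j ++ l) ω)).subset ?_)
  intro i hi
  simp only [Function.mem_support] at hi
  by_contra hns
  apply hi
  simp only [Set.mem_setOf_eq, not_and] at hns
  unfold xf
  split
  · rename_i heq
    rw [pathProdFrom_eq_zero' S (hns (le_of_eq heq)), mv_zero']
  · rfl

lemma An_eq_zero_of_not_mem (j : List ℕ) (ω : Ω) {c : ℕ}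
    (hc : c ∉ Finset.Icc 1 (S.Nn j ω)) : S.An j c ω = 0 := by
  rw [Finset.mem_Icc] at hc
  push_neg at hc
  rcases Nat.lt_or_ge c 1 with h1 | h1
  · interval_cases c
    exact S.hA0 j ω
  · exact S.hNmax j ω c (hc h1)

lemma qf_cons (j : List ℕ) (m : ℕ) (ω : Ω) (c : ℕ) (i' : List ℕ) :
    qf S j (m + 1) ω (c :: i') = mv (S.An j c ω) (qf S (j ++ [c]) m ω i') := by
  unfold qf
  simp only [List.length_cons, Nat.succ_lt_succ_iff]
  split
  · rw [pathProdFrom_cons, mv_mul]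
    simp [List.append_assoc]
  · rw [mv_zero]

lemma xf_cons (j : List ℕ) (m : ℕ) (ω : Ω) (c : ℕ) (i' : List ℕ) :
    xf S j (m + 1) ω (c :: i') = mv (S.An j c ω) (xf S (j ++ [c]) m ω i') := by
  unfold xf
  simp only [List.length_cons, Nat.add_right_cancel_iff]
  split
  · rw [pathProdFrom_cons, mv_mul]
    simp [List.append_assoc]
  · rw [mv_zero]

lemma Ysub_succ (j : List ℕ) (m : ℕ) (ω : Ω) :
    S.Ysub j (m + 1) ω
      = (∑ c ∈ Finset.Icc 1 (S.Nn j ω), mv (S.An j c ω) (S.Ysub (j ++ [c]) m ω))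
        + S.Qn j ω := by
  have h0q : ∀ c i', c ∉ Finset.Icc 1 (S.Nn j ω) → qf S j (m + 1) ω (c :: i') = 0 := by
    intro c i' hc
    rw [qf_cons, An_eq_zero_of_not_mem S j ω hc, mv_zero']
  have h0x : ∀ c i', c ∉ Finset.Icc 1 (S.Nn j ω) → xf S j (m + 1) ω (c :: i') = 0 := by
    intro c i' hc
    rw [xf_cons, An_eq_zero_of_not_mem S j ω hc, mv_zero']
  rw [Ysub_eq, tsum_list_split _ (qf_summable S j (m + 1) ω) (S.Nn j ω) h0q,
    tsum_list_split _ (xf_summable S j (m + 1) ω) (S.Nn j ω) h0x]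
  have hq0 : qf S j (m + 1) ω ([]) = S.Qn j ω := by
    simp [qf, pathProdFrom_nil, mv_one]
  have hx0 : xf S j (m + 1) ω ([]) = 0 := by
    simp [xf]
  rw [hq0, hx0]
  have hqc : ∀ c : ℕ, ∑' i', qf S j (m + 1) ω (c :: i')
      = mv (S.An j c ω) (∑' i', qf S (j ++ [c]) m ω i') := by
    intro c
    rw [tsum_congr (fun i' => qf_cons S j m ω c i'), mv_tsum _ _ (qf_summable S (j ++ [c]) m ω)]
  have hxc : ∀ c : ℕ, ∑' i', xf S j (m + 1) ω (c :: i')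
      = mv (S.An j c ω) (∑' i', xf S (j ++ [c]) m ω i') := by
    intro c
    rw [tsum_congr (fun i' => xf_cons S j m ω c i'), mv_tsum _ _ (xf_summable S (j ++ [c]) m ω)]
  rw [Finset.sum_congr rfl (fun c _ => hqc c), Finset.sum_congr rfl (fun c _ => hxc c)]
  have hsplit : ∀ c ∈ Finset.Icc 1 (S.Nn j ω),
      mv (S.An j c ω) (S.Ysub (j ++ [c]) m ω)
        = mv (S.An j c ω) (∑' i', qf S (j ++ [c]) m ω i')
          + mv (S.An j c ω) (∑' i', xf S (j ++ [c]) m ω i') := by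
    intro c _
    rw [Ysub_eq, mv_add]
  rw [Finset.sum_congr rfl hsplit, Finset.sum_add_distrib]
  abel

lemma decomp (ω : Ω) :
    ∀ (i j : List ℕ) (l : ℕ), i.length ≤ l →
      (∀ k : Fin i.length, 1 ≤ i.get k ∧ i.get k ≤ S.Nn (j ++ i.take (k : ℕ)) ω) →
      S.Ysub j l ω
        = mv (pathProdFrom S.An j i ω) (S.Ysub (j ++ i) (l - i.length) ω)
          + ∑ k : Fin i.length,
              mv (pathProdFrom S.An j (i.take (k : ℕ)) ω)
                ((∑ c ∈ (Finset.Icc 1 (S.Nn (j ++ i.take (k : ℕ)) ω)).erase (i.get k),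
                    mv (S.An (j ++ i.take (k : ℕ)) c ω)
                      (S.Ysub ((j ++ i.take (k : ℕ)) ++ [c]) (l - (k : ℕ) - 1) ω))
                  + S.Qn (j ++ i.take (k : ℕ)) ω) := by
  intro i
  induction i with
  | nil =>
    intro j l _ _
    simp [pathProdFrom_nil, mv_one]
  | cons c i' ih =>
    intro j l hlen hcond
    obtain ⟨l', rfl⟩ : ∃ l', l = l' + 1 := ⟨l - 1, by simp at hlen; omega⟩
    have hc0 := hcond ⟨0, by simp⟩
    have hcN : c ∈ Finset.Icc 1 (S.Nn j ω) := Finset.mem_Icc.mpr (by simpa using hc0)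
    have hlen' : i'.length ≤ l' := by simpa [Nat.succ_le_succ_iff] using hlen
    have hcond' : ∀ k : Fin i'.length,
        1 ≤ i'.get k ∧ i'.get k ≤ S.Nn ((j ++ [c]) ++ i'.take (k : ℕ)) ω := by
      intro k
      have := hcond k.succ
      simpa [List.take_succ_cons, List.append_assoc] using this
    rw [Ysub_succ S j l' ω, ← Finset.add_sum_erase _ _ hcN,
      ih (j ++ [c]) l' hlen' hcond']
    simp only [Fin.sum_univ_succ, pathProdFrom_cons, pathProdFrom_nil, mv_one, mv_mul, mv_add,
      mv_sum,
      List.take_succ_cons, List.take_zero, List.append_nil, List.append_assoc,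
      List.singleton_append, List.get_eq_getElem, List.getElem_cons_zero,
      List.getElem_cons_succ, Fin.val_succ, Fin.val_zero, List.length_cons,
      Nat.succ_sub_succ, Nat.succ_sub_one, List.nil_append, Nat.sub_zero,
      Nat.add_sub_cancel_left, Nat.add_sub_cancel]
    abel

end WBPaux

set_option maxHeartbeats 1000000 in
/-- the almost sure decomposition of the weighted branching
process along the path to a node `i ∈ T` with `|i| ≤ l`:
`Y_l = Π_i [Y_{l−|i|}]_i + ∑_{k=1}^{|i|} Π_{i|_{k−1}} Z_{l,i|_k}`. -/
theorem wbp_decomposition {d : ℕ} {Ω : Type} [MeasurableSpace Ω] (S : Setup d Ω) :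
    ∀ l : ℕ, ∀ i : List ℕ, i.length ≤ l →
      ∀ᵐ ω ∂S.P, memT S.Nn ω i →
        S.Y l ω
          = mv (pathProd S.An i ω) (S.Ysub i (l - i.length) ω)
            + ∑ k : Fin i.length,
                mv (pathProd S.An (i.take (k : ℕ)) ω)
                  (S.Zwbp l (i.take (k : ℕ)) (i.get k) ω) := by
  intro l i hlen
  refine Filter.Eventually.of_forall ?_
  intro ω hmem
  have h := decomp S ω i ([]) l hlen (by intro k; simpa using hmem k)
  simp only [List.nil_append] at h
  rw [show S.Y l ω = S.Ysub ([]) l ω from rfl, h]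
  congr 1
  refine Finset.sum_congr rfl ?_
  intro k _
  unfold Setup.Zwbp
  rw [List.length_take, Nat.min_eq_left (le_of_lt k.isLt)]
  rfl

end
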